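/- Let p_1 ≥ p_2 ≥ … ≥ p_K > 0, let n, n_1 be integers with 0 ≤ n_1 ≤ n, and for each i ∈ {1,…,K} define S_i = (n−n_1)! · [z^{n−n_1}] ∏_{j≠i} T(p_j z), where T(x) = Σ_{r=0}^{u} x^r/r! with u = min(n_1, n−n_1). Then for every i < K: S_i ≤ S_{i+1} ≤ (p_i/p_{i+1})^{n_1} · S_i. -/

import Mathlib

open Polynomial Finset

private lemma coeff_T (a : ℝ) (u k : ℕ) :
    (∑ r ∈ Finset.range (u + 1),
        Polynomial.C (a ^ r / (r.factorial : ℝ)) * Polynomial.X ^ r).coeff k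
      = if k ≤ u then a ^ k / (k.factorial : ℝ) else 0 := by
  rw [Polynomial.finset_sum_coeff]
  simp only [Polynomial.coeff_C_mul, Polynomial.coeff_X_pow, mul_ite, mul_one, mul_zero]
  rw [Finset.sum_ite_eq (Finset.range (u + 1)) k (fun r => a ^ r / (r.factorial : ℝ))]
  simp [Nat.lt_succ_iff]

private lemma coeff_prod_nonneg {ι : Type*} [DecidableEq ι] (s : Finset ι)
    (f : ι → Polynomial ℝ) (hf : ∀ j ∈ s, ∀ k, 0 ≤ (f j).coeff k) :
    ∀ k, 0 ≤ (∏ j ∈ s, f j).coeff k := by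
  induction s using Finset.induction with
  | empty => intro k; simp only [Finset.prod_empty, Polynomial.coeff_one]
             split <;> norm_num
  | @insert a s ha ih =>
      intro k
      rw [Finset.prod_insert ha, Polynomial.coeff_mul]
      refine Finset.sum_nonneg fun x _ => mul_nonneg ?_ ?_
      · exact hf a (Finset.mem_insert_self _ _) _
      · exact ih (fun j hj k => hf j (Finset.mem_insert_of_mem hj) k) _

private lemma coeff_mul_le (P₁ P₂ Q : Polynomial ℝ) (hQ : ∀ k, 0 ≤ Q.coeff k)
    (hle : ∀ k, P₁.coeff k ≤ P₂.coeff k) (m : ℕ) :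
    (P₁ * Q).coeff m ≤ (P₂ * Q).coeff m := by
  rw [Polynomial.coeff_mul, Polynomial.coeff_mul]
  exact Finset.sum_le_sum fun k _ => mul_le_mul_of_nonneg_right (hle k.1) (hQ k.2)

private lemma coeff_mul_le_smul (P₁ P₂ Q : Polynomial ℝ) (R : ℝ)
    (hQ : ∀ k, 0 ≤ Q.coeff k)
    (hle : ∀ k, P₂.coeff k ≤ R * P₁.coeff k) (m : ℕ) :
    (P₂ * Q).coeff m ≤ R * (P₁ * Q).coeff m := by
  rw [Polynomial.coeff_mul, Polynomial.coeff_mul, Finset.mul_sum]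
  refine Finset.sum_le_sum fun k _ => ?_
  calc P₂.coeff k.1 * Q.coeff k.2 ≤ (R * P₁.coeff k.1) * Q.coeff k.2 :=
        mul_le_mul_of_nonneg_right (hle k.1) (hQ k.2)
    _ = R * (P₁.coeff k.1 * Q.coeff k.2) := by ring

/-- monotonicity and ratio bound for the tail-aggregation constants
`S_i = (n−n₁)! · [z^{n−n₁}] ∏_{j≠i} T(p_j z)` with `T` truncated at `u = min(n₁, n−n₁)`. -/
theorem stmt_6 (K n n₁ : ℕ) (hK : 0 < K) (hn₁ : n₁ ≤ n)
    (p : Fin K → ℝ) (hpos : ∀ i, 0 < p i)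
    (hmono : ∀ i j : Fin K, i ≤ j → p j ≤ p i)
    (S : Fin K → ℝ)
    (hS : ∀ i, S i = ((n - n₁).factorial : ℝ) *
      (∏ j ∈ Finset.univ.erase i,
        (∑ r ∈ Finset.range (min n₁ (n - n₁) + 1),
          Polynomial.C ((p j) ^ r / (r.factorial : ℝ)) * Polynomial.X ^ r :
            Polynomial ℝ)).coeff (n - n₁))
    (i : Fin K) (h : i.val + 1 < K) :
    S i ≤ S ⟨i.val + 1, h⟩ ∧
      S ⟨i.val + 1, h⟩ ≤ (p i / p ⟨i.val + 1, h⟩) ^ n₁ * S i := by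
  classical
  set u : ℕ := min n₁ (n - n₁) with hu
  set m : ℕ := n - n₁ with hm
  set i' : Fin K := ⟨i.val + 1, h⟩ with hi'
  set f : Fin K → Polynomial ℝ := fun j =>
    ∑ r ∈ Finset.range (u + 1),
      Polynomial.C ((p j) ^ r / (r.factorial : ℝ)) * Polynomial.X ^ r with hf
  have hne : i ≠ i' := by
    intro hcontra
    have := congrArg Fin.val hcontra
    simp [hi'] at this
  have hmem' : i' ∈ Finset.univ.erase i := by
    simp [Finset.mem_erase, hne.symm]
  have hmem : i ∈ Finset.univ.erase i' := by
    simp [Finset.mem_erase, hne]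
  set Q : Polynomial ℝ := ∏ j ∈ (Finset.univ.erase i).erase i', f j with hQdef
  have e1 : ∏ j ∈ Finset.univ.erase i, f j = f i' * Q :=
    (Finset.mul_prod_erase _ _ hmem').symm
  have e2 : ∏ j ∈ Finset.univ.erase i', f j = f i * Q := by
    rw [← Finset.mul_prod_erase _ f hmem, hQdef, Finset.erase_right_comm]
  have hT_nonneg : ∀ j : Fin K, ∀ k, 0 ≤ (f j).coeff k := by
    intro j k
    rw [hf, coeff_T]
    split
    · exact div_nonneg (pow_nonneg (hpos j).le k) (by positivity)
    · exact le_rfl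
  have hQ : ∀ k, 0 ≤ Q.coeff k :=
    coeff_prod_nonneg _ _ (fun j _ k => hT_nonneg j k)
  have hle : i ≤ i' := by
    simp [hi', Fin.le_def]
  have hpp : p i' ≤ p i := hmono i i' hle
  have hpi' : 0 < p i' := hpos i'
  have hfac : (0:ℝ) ≤ (m.factorial : ℝ) := by positivity
  have hSi : S i = (m.factorial : ℝ) * ((f i' * Q).coeff m) := by
    rw [hS i, ← e1]
  have hSi' : S i' = (m.factorial : ℝ) * ((f i * Q).coeff m) := by
    rw [hS i', ← e2]
  constructor
  · rw [hSi, hSi']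
    refine mul_le_mul_of_nonneg_left ?_ hfac
    refine coeff_mul_le _ _ _ hQ (fun k => ?_) m
    rw [hf]
    simp only
    rw [coeff_T, coeff_T]
    split
    · have : p i' ^ k ≤ p i ^ k := pow_le_pow_left₀ hpi'.le hpp k
      gcongr
    · exact le_rfl
  · rw [hSi, hSi']
    set R : ℝ := (p i / p i') ^ n₁ with hR
    have hR1 : (1:ℝ) ≤ p i / p i' := (one_le_div hpi').mpr hpp
    calc (m.factorial : ℝ) * ((f i * Q).coeff m)
        ≤ (m.factorial : ℝ) * (R * ((f i' * Q).coeff m)) := by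
          refine mul_le_mul_of_nonneg_left ?_ hfac
          refine coeff_mul_le_smul _ _ _ R hQ (fun k => ?_) m
          rw [hf]
          simp only
          rw [coeff_T, coeff_T]
          split
          · rename_i hk
            have hkn₁ : k ≤ n₁ := le_trans hk (min_le_left _ _)
            have hpow : (p i / p i') ^ k ≤ R := pow_le_pow_right₀ hR1 hkn₁
            have hfk : (0:ℝ) < (k.factorial : ℝ) := by positivity
            have key : p i ^ k ≤ R * p i' ^ k := by
              have : p i ^ k = (p i / p i') ^ k * p i' ^ k := by
                rw [div_pow, div_mul_cancel₀ _ (pow_ne_zero _ hpi'.ne')]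
              rw [this]
              exact mul_le_mul_of_nonneg_right hpow (by positivity)
            rw [div_le_iff₀ hfk] at *
            calc p i ^ k ≤ R * p i' ^ k := key
              _ = R * (p i' ^ k / (k.factorial:ℝ)) * (k.factorial:ℝ) := by
                  field_simp
          · simp
      _ = R * ((m.factorial : ℝ) * ((f i' * Q).coeff m)) := by ring
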